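/- Let Â be any minimizer of the empirical risk L̂(·; D) over the set of real symmetric positive semidefinite d×d matrices, for a fixed dataset D = (z_1, …, z_n) whose label vectors satisfy 0 ≤ ⟨y_i, y_j⟩ ≤ L̄ for all i ≠ j. Then ‖Â‖_F ≤ Tr(Â) ≤ (1/λ)·max_{i≠j} g(⟨y_i, y_j⟩)·⟨y_i, y_j⟩² ≤ L̄²/λ, where ‖·‖_F is the Frobenius norm. -/

import Mathlib

open MeasureTheory Finset
open scoped ENNReal

noncomputable section

/-- A labeled data point z = (x, y) ∈ ℝ^d × ℝ^L. -/
abbrev Pt (d L : ℕ) := (Fin d → ℝ) × (Fin L → ℝ)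

/-- Inner product ⟨y, y'⟩ of label vectors. -/
def ipY {L : ℕ} (y y' : Fin L → ℝ) : ℝ := ∑ i, y i * y' i

/-- Bilinear form xᵀ A x'. -/
def qForm {d : ℕ} (A : Matrix (Fin d) (Fin d) ℝ) (x x' : Fin d → ℝ) : ℝ :=
  ∑ i, ∑ j, x i * A i j * x' j

/-- Euclidean norm ‖x‖₂. -/
def norm2 {d : ℕ} (x : Fin d → ℝ) : ℝ := Real.sqrt (∑ i, x i ^ 2)

/-- Frobenius norm ‖A‖_F. -/
def frobNorm {d : ℕ} (A : Matrix (Fin d) (Fin d) ℝ) : ℝ :=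
  Real.sqrt (∑ i, ∑ j, (A i j) ^ 2)

/-- Loss ℓ(A; z, z') := g(⟨y, y'⟩)·(⟨y, y'⟩ − xᵀ A x')² + λ·Tr(A). -/
def lossFn {d L : ℕ} (g : ℝ → ℝ) (lam : ℝ) (A : Matrix (Fin d) (Fin d) ℝ)
    (z z' : Pt d L) : ℝ :=
  g (ipY z.2 z'.2) * (ipY z.2 z'.2 - qForm A z.1 z'.1) ^ 2 + lam * A.trace

/-- Empirical risk L̂(A; D) := (1/(n(n−1))) Σᵢ Σ_{j≠i} ℓ(A; zᵢ, zⱼ). -/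
def empRisk {d L : ℕ} (g : ℝ → ℝ) (lam : ℝ) {n : ℕ} (A : Matrix (Fin d) (Fin d) ℝ)
    (D : Fin n → Pt d L) : ℝ :=
  (1 / ((n : ℝ) * ((n : ℝ) - 1))) * ∑ i, ∑ j ∈ univ.erase i, lossFn g lam A (D i) (D j)

/-- Population risk L(A) := E_{z,z' i.i.d. ∼ P}[ℓ(A; z, z')]. -/
def popRisk {d L : ℕ} (g : ℝ → ℝ) (lam : ℝ) (P : Measure (Pt d L))
    (A : Matrix (Fin d) (Fin d) ℝ) : ℝ :=
  ∫ z, (∫ z', lossFn g lam A z z' ∂P) ∂P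

/-- Risk relative to the training set, L̃(A; D) := (1/n) Σₖ E_{z∼P}[ℓ(A; z, zₖ)]. -/
def tilRisk {d L : ℕ} (g : ℝ → ℝ) (lam : ℝ) (P : Measure (Pt d L)) {n : ℕ}
    (A : Matrix (Fin d) (Fin d) ℝ) (D : Fin n → Pt d L) : ℝ :=
  (1 / (n : ℝ)) * ∑ k, ∫ z, lossFn g lam A z (D k) ∂P

/-- Law of a Rademacher random variable: uniform on {−1, +1}. -/
def radMeasure : Measure ℝ :=
  (2⁻¹ : ℝ≥0∞) • Measure.dirac (-1) + (2⁻¹ : ℝ≥0∞) • Measure.dirac 1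



lemma psd_diag {d : ℕ} {A : Matrix (Fin d) (Fin d) ℝ} (hA : A.PosSemidef) (i : Fin d) :
    0 ≤ A i i := by
  have := hA.dotProduct_mulVec_nonneg (Pi.single i 1)
  simpa [Matrix.mulVec_single, dotProduct, Pi.single_apply, Finset.sum_ite_eq'] using this

lemma psd_entry_sq {d : ℕ} {A : Matrix (Fin d) (Fin d) ℝ} (hA : A.PosSemidef) (i j : Fin d) :
    A i j ^ 2 ≤ A i i * A j j := by
  rcases eq_or_ne i j with rfl | hij
  · nlinarith [psd_diag hA i]
  · have key : ∀ t : ℝ, 0 ≤ A i i * (t * t) + (2 * A i j) * t + A j j := by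
      intro t
      have h2 := hA.dotProduct_mulVec_nonneg ((t • (Pi.single i 1 : Fin d → ℝ) + Pi.single j 1))
      have hsym : A j i = A i j := by
        have := congrFun (congrFun hA.1 i) j
        simpa [Matrix.conjTranspose_apply] using this
      simp only [Matrix.mulVec_add, Matrix.mulVec_smul, Matrix.mulVec_single,
        dotProduct_add, add_dotProduct, smul_dotProduct,
        single_dotProduct, star_trivial, dotProduct_smul,
        smul_eq_mul, one_mul, mul_one, Matrix.col_apply, MulOpposite.op_one, one_smul] at h2
      rw [hsym] at h2
      ring_nf at h2 ⊢
      linarith [h2]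
    have h := discrim_le_zero (a := A i i) (b := 2 * A i j) (c := A j j) key
    rw [discrim] at h
    nlinarith [h]

lemma psd_trace_nonneg' {d : ℕ} {A : Matrix (Fin d) (Fin d) ℝ} (hA : A.PosSemidef) :
    0 ≤ A.trace := by
  have : A.trace = ∑ i, A i i := by simp [Matrix.trace, Matrix.diag]
  rw [this]
  exact Finset.sum_nonneg fun i _ => psd_diag hA i

lemma psd_frob {d : ℕ} {A : Matrix (Fin d) (Fin d) ℝ} (hA : A.PosSemidef) :
    frobNorm A ≤ A.trace := by
  have htr : A.trace = ∑ i, A i i := by simp [Matrix.trace, Matrix.diag]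
  have h1 : (∑ i, ∑ j, (A i j) ^ 2) ≤ (∑ i, A i i) * (∑ j, A j j) := by
    rw [Finset.sum_mul_sum]
    exact Finset.sum_le_sum fun i _ => Finset.sum_le_sum fun j _ => psd_entry_sq hA i j
  have h0 : 0 ≤ ∑ i, A i i := htr ▸ psd_trace_nonneg' hA
  calc frobNorm A ≤ Real.sqrt ((∑ i, A i i) * (∑ j, A j j)) := Real.sqrt_le_sqrt h1
    _ = ∑ i, A i i := Real.sqrt_mul_self h0
    _ = A.trace := htr.symm

theorem stmt0 {d L : ℕ} {lam Lbar : ℝ} (hlam : 0 < lam) (hLbar : 0 ≤ Lbar)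
    (g : ℝ → ℝ) (hg : ∀ t, 0 ≤ g t ∧ g t ≤ 1)
    {n : ℕ} (hn : 2 ≤ n) (D : Fin n → Pt d L)
    (hD : ∀ i j : Fin n, i ≠ j →
      0 ≤ ipY (D i).2 (D j).2 ∧ ipY (D i).2 (D j).2 ≤ Lbar)
    (Ahat : Matrix (Fin d) (Fin d) ℝ) (hAhat : Ahat.PosSemidef)
    (hmin : ∀ A : Matrix (Fin d) (Fin d) ℝ, A.PosSemidef →
      empRisk g lam Ahat D ≤ empRisk g lam A D) :
    frobNorm Ahat ≤ Ahat.trace ∧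
    Ahat.trace ≤ (1 / lam) * (⨆ p : {p : Fin n × Fin n // p.1 ≠ p.2},
        g (ipY (D p.1.1).2 (D p.1.2).2) * (ipY (D p.1.1).2 (D p.1.2).2) ^ 2) ∧
    (1 / lam) * (⨆ p : {p : Fin n × Fin n // p.1 ≠ p.2},
        g (ipY (D p.1.1).2 (D p.1.2).2) * (ipY (D p.1.1).2 (D p.1.2).2) ^ 2) ≤
      Lbar ^ 2 / lam := by
  classical
  set f : {p : Fin n × Fin n // p.1 ≠ p.2} → ℝ := fun p =>
    g (ipY (D p.1.1).2 (D p.1.2).2) * (ipY (D p.1.1).2 (D p.1.2).2) ^ 2 with hf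
  have hne : Nonempty {p : Fin n × Fin n // p.1 ≠ p.2} := by
    refine ⟨⟨(⟨0, by omega⟩, ⟨1, by omega⟩), ?_⟩⟩
    simp [Fin.ext_iff]
  have hbdd : BddAbove (Set.range f) := Finite.bddAbove_range f
  set S : ℝ := ⨆ p : {p : Fin n × Fin n // p.1 ≠ p.2}, f p with hS
  have hfS : ∀ p, f p ≤ S := fun p => le_ciSup hbdd p
  have hSL : S ≤ Lbar ^ 2 := by
    refine ciSup_le fun p => ?_
    have hD' := hD p.1.1 p.1.2 p.2
    have hg' := hg (ipY (D p.1.1).2 (D p.1.2).2)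
    have hsq : (ipY (D p.1.1).2 (D p.1.2).2) ^ 2 ≤ Lbar ^ 2 := by nlinarith [hD'.1, hD'.2]
    have hfp : f p = g (ipY (D p.1.1).2 (D p.1.2).2) * (ipY (D p.1.1).2 (D p.1.2).2) ^ 2 := rfl
    rw [hfp]
    nlinarith [hg'.1, hg'.2, sq_nonneg (ipY (D p.1.1).2 (D p.1.2).2)]
  have hnpos : (0:ℝ) < (n : ℝ) * ((n : ℝ) - 1) := by
    have : (2:ℝ) ≤ (n:ℝ) := by exact_mod_cast hn
    nlinarith
  have hcard : ∀ i : Fin n, (univ.erase i).card = n - 1 := fun i => by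
    rw [Finset.card_erase_of_mem (Finset.mem_univ i), Finset.card_univ, Fintype.card_fin]
  have hcardR : ((n:ℝ) - 1) = ((n - 1 : ℕ) : ℝ) := by
    have : (1:ℕ) ≤ n := by omega
    push_cast [this]
    ring
  -- lower bound on empRisk at Ahat
  have hlow : lam * Ahat.trace ≤ empRisk g lam Ahat D := by
    unfold empRisk
    have hsum : (n : ℝ) * ((n : ℝ) - 1) * (lam * Ahat.trace)
        ≤ ∑ i, ∑ j ∈ univ.erase i, lossFn g lam Ahat (D i) (D j) := by
      have : ∀ i : Fin n, ∀ j ∈ univ.erase i,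
          lam * Ahat.trace ≤ lossFn g lam Ahat (D i) (D j) := by
        intro i j _
        unfold lossFn
        have hg' := hg (ipY (D i).2 (D j).2)
        nlinarith [sq_nonneg (ipY (D i).2 (D j).2 - qForm Ahat (D i).1 (D j).1), hg'.1]
      calc (n : ℝ) * ((n : ℝ) - 1) * (lam * Ahat.trace)
          = ∑ _i : Fin n, ((n : ℝ) - 1) * (lam * Ahat.trace) := by
            rw [Finset.sum_const, Finset.card_univ, Fintype.card_fin]; ring
        _ ≤ ∑ i, ∑ j ∈ univ.erase i, lossFn g lam Ahat (D i) (D j) := by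
            refine Finset.sum_le_sum fun i _ => ?_
            calc ((n : ℝ) - 1) * (lam * Ahat.trace)
                = ∑ _j ∈ univ.erase i, (lam * Ahat.trace) := by
                  rw [Finset.sum_const, hcard i, hcardR]; rw [nsmul_eq_mul]
              _ ≤ _ := Finset.sum_le_sum (this i)
    calc lam * Ahat.trace
        = (1 / ((n : ℝ) * ((n : ℝ) - 1))) * ((n : ℝ) * ((n : ℝ) - 1) * (lam * Ahat.trace)) := by
          rw [← mul_assoc, one_div_mul_cancel hnpos.ne', one_mul]
      _ ≤ _ := by
          apply mul_le_mul_of_nonneg_left hsum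
          positivity
  -- upper bound: empRisk at 0
  have hupp : empRisk g lam (0 : Matrix (Fin d) (Fin d) ℝ) D ≤ S := by
    unfold empRisk
    have hsum : ∑ i, ∑ j ∈ univ.erase i, lossFn g lam (0 : Matrix (Fin d) (Fin d) ℝ) (D i) (D j)
        ≤ (n : ℝ) * ((n : ℝ) - 1) * S := by
      have hterm : ∀ i : Fin n, ∀ j ∈ univ.erase i,
          lossFn g lam (0 : Matrix (Fin d) (Fin d) ℝ) (D i) (D j) ≤ S := by
        intro i j hj
        have hij : i ≠ j := fun h => (Finset.mem_erase.mp hj).1 h.symm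
        have := hfS ⟨(i, j), hij⟩
        unfold lossFn qForm
        simpa [Matrix.trace, Matrix.diag, hf] using this
      calc ∑ i, ∑ j ∈ univ.erase i, lossFn g lam (0 : Matrix (Fin d) (Fin d) ℝ) (D i) (D j)
          ≤ ∑ i : Fin n, ((n : ℝ) - 1) * S := by
            refine Finset.sum_le_sum fun i _ => ?_
            calc ∑ j ∈ univ.erase i, lossFn g lam (0 : Matrix (Fin d) (Fin d) ℝ) (D i) (D j)
                ≤ ∑ _j ∈ univ.erase i, S := Finset.sum_le_sum (hterm i)
              _ = ((n : ℝ) - 1) * S := by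
                  rw [Finset.sum_const, hcard i, hcardR, nsmul_eq_mul]
        _ = (n : ℝ) * ((n : ℝ) - 1) * S := by
            rw [Finset.sum_const, Finset.card_univ, Fintype.card_fin, nsmul_eq_mul]; ring
    calc (1 / ((n : ℝ) * ((n : ℝ) - 1))) *
          ∑ i, ∑ j ∈ univ.erase i, lossFn g lam (0 : Matrix (Fin d) (Fin d) ℝ) (D i) (D j)
        ≤ (1 / ((n : ℝ) * ((n : ℝ) - 1))) * ((n : ℝ) * ((n : ℝ) - 1) * S) := by
          apply mul_le_mul_of_nonneg_left hsum
          positivity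
      _ = S := by rw [← mul_assoc, one_div_mul_cancel hnpos.ne', one_mul]
  have hzero : (0 : Matrix (Fin d) (Fin d) ℝ).PosSemidef := by
    constructor
    · simp [Matrix.IsHermitian]
    · intro x; simp
  have hchain : lam * Ahat.trace ≤ S :=
    le_trans hlow (le_trans (hmin 0 hzero) hupp)
  refine ⟨psd_frob hAhat, ?_, ?_⟩
  · rw [one_div, inv_mul_eq_div, le_div_iff₀ hlam]
    linarith [hchain]
  · calc 1/lam * S ≤ 1/lam * Lbar ^ 2 :=
        mul_le_mul_of_nonneg_left hSL (by positivity)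
      _ = Lbar ^ 2 / lam := by ring


end
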